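/- Let x1 ∈ (0,1) and x2 ∈ (1,∞) satisfy x1·e^{1-x1} = x2·e^{1-x2}, and let c ≤ -1/3. Then 1 - x1·x2 + c(1 - x1)(x2 - 1) < 0. -/

import Mathlib

open Real

private lemma aux_pos (f f' : ℝ → ℝ) (hd : ∀ x, HasDerivAt f (f' x) x) (h0 : f 0 = 0)
    (hp : ∀ x, 0 < x → 0 < f' x) : ∀ x, 0 < x → 0 < f x := by
  intro x hx
  have hmono : StrictMonoOn f (Set.Ici 0) := by
    apply strictMonoOn_of_deriv_pos (convex_Ici 0)
    · exact fun y _ => (hd y).continuousAt.continuousWithinAt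
    · intro y hy
      rw [interior_Ici] at hy
      rw [(hd y).deriv]
      exact hp y hy
  have := hmono Set.self_mem_Ici (le_of_lt hx) hx
  rwa [h0] at this

private lemma hne (x : ℝ) : HasDerivAt (fun t => Real.exp (-t)) (-Real.exp (-x)) x := by
  simpa [Function.comp_def] using (Real.hasDerivAt_exp (-x)).comp x (hasDerivAt_neg x)

private lemma g3_pos : ∀ x, 0 < x →
    0 < x * Real.exp x + x * Real.exp (-x) - Real.exp x + Real.exp (-x) := by
  apply aux_pos _ (fun x => x * Real.exp x - x * Real.exp (-x))
  · intro x
    have h1 := (hasDerivAt_id x).mul (Real.hasDerivAt_exp x)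
    have h2 := (hasDerivAt_id x).mul (hne x)
    have := ((h1.add h2).sub (Real.hasDerivAt_exp x)).add (hne x)
    refine this.congr_deriv ?_
    simp only [id_eq]
    ring
  · norm_num
  · intro x hx
    have h1 : Real.exp (-x) < Real.exp x := Real.exp_lt_exp.2 (by linarith)
    nlinarith

private lemma g2_pos : ∀ x, 0 < x →
    0 < x * Real.exp x - x * Real.exp (-x) - 2 * Real.exp x - 2 * Real.exp (-x) + 4 := by
  apply aux_pos _ (fun x => x * Real.exp x + x * Real.exp (-x) - Real.exp x + Real.exp (-x))
  · intro x
    have h1 := (hasDerivAt_id x).mul (Real.hasDerivAt_exp x)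
    have h2 := (hasDerivAt_id x).mul (hne x)
    have := ((((h1.sub h2).sub ((Real.hasDerivAt_exp x).const_mul 2)).sub
      ((hne x).const_mul 2)).add (hasDerivAt_const x 4))
    refine this.congr_deriv ?_
    simp only [id_eq]
    ring
  · norm_num
  · exact g3_pos

private lemma g1_pos : ∀ x, 0 < x →
    0 < x * Real.exp x + x * Real.exp (-x) - 3 * Real.exp x + 3 * Real.exp (-x) + 4 * x := by
  apply aux_pos _ (fun x => x * Real.exp x - x * Real.exp (-x) - 2 * Real.exp x - 2 * Real.exp (-x) + 4)
  · intro x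
    have h1 := (hasDerivAt_id x).mul (Real.hasDerivAt_exp x)
    have h2 := (hasDerivAt_id x).mul (hne x)
    have := ((((h1.add h2).sub ((Real.hasDerivAt_exp x).const_mul 3)).add
      ((hne x).const_mul 3)).add ((hasDerivAt_id x).const_mul 4))
    refine this.congr_deriv ?_
    simp only [id_eq]
    ring
  · norm_num
  · exact g2_pos

private lemma g0_pos : ∀ x, 0 < x →
    0 < x * Real.exp x - x * Real.exp (-x) + 2 * x ^ 2 - 4 * Real.exp x - 4 * Real.exp (-x) + 8 := by
  apply aux_pos _ (fun x => x * Real.exp x + x * Real.exp (-x) - 3 * Real.exp x + 3 * Real.exp (-x) + 4 * x)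
  · intro x
    have h1 := (hasDerivAt_id x).mul (Real.hasDerivAt_exp x)
    have h2 := (hasDerivAt_id x).mul (hne x)
    have := (((((h1.sub h2).add (((hasDerivAt_pow 2 x)).const_mul 2)).sub
      ((Real.hasDerivAt_exp x).const_mul 4)).sub ((hne x).const_mul 4)).add (hasDerivAt_const x 8))
    refine this.congr_deriv ?_
    simp only [id_eq]
    ring
  · norm_num
  · exact g1_pos

theorem stmt13 (x1 x2 c : ℝ) (h1 : x1 ∈ Set.Ioo (0:ℝ) 1) (h2 : x2 ∈ Set.Ioi (1:ℝ))
    (h : x1 * Real.exp (1 - x1) = x2 * Real.exp (1 - x2)) (hc : c ≤ -1/3) :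
    1 - x1 * x2 + c * (1 - x1) * (x2 - 1) < 0 := by
  obtain ⟨hx1a, hx1b⟩ := h1
  have hx2 : 1 < x2 := h2
  set t : ℝ := x2 - x1 with htdef
  have ht : 0 < t := by simp only [htdef]; linarith
  -- From the constraint: x2 = x1 * exp t
  have hE : x1 * Real.exp t = x2 := by
    have h'' : (x1 * Real.exp t) * Real.exp (1 - x2) = x2 * Real.exp (1 - x2) := by
      rw [mul_assoc, ← Real.exp_add, show t + (1 - x2) = 1 - x1 by simp only [htdef]; ring]
      exact h
    exact mul_right_cancel₀ (Real.exp_pos _).ne' h''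
  set E : ℝ := Real.exp t with hEdef
  have hE1 : 1 < E := by
    rw [hEdef]
    calc (1:ℝ) = Real.exp 0 := by simp
    _ < Real.exp t := Real.exp_lt_exp.2 ht
  have hEpos : 0 < E := by linarith
  have hEinv : E * Real.exp (-t) = 1 := by
    rw [hEdef, ← Real.exp_add]; simp
  -- the analytic key inequality
  have hg := g0_pos t ht
  rw [← hEdef] at hg
  -- multiply by E to clear exp(-t)
  have key : 0 < t * E ^ 2 - t + 2 * t ^ 2 * E - 4 * (E - 1) ^ 2 := by
    have := mul_pos hg hEpos
    nlinarith [this, hEinv]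
  -- algebraic relations
  have hx1v : x1 * (E - 1) = t := by nlinarith [hE]
  have hx2v : x2 * (E - 1) = t * E := by nlinarith [hE, hx1v]
  have hid : (x1 + x2 + 2 * x1 * x2 - 4) * (E - 1) ^ 2
      = t * E ^ 2 - t + 2 * t ^ 2 * E - 4 * (E - 1) ^ 2 := by
    linear_combination ((E - 1) + 2 * E * t + 2 * (x2 * (E - 1) - t * E)) * hx1v
      + ((E - 1) + 2 * t) * hx2v
  have hsq : 0 < (E - 1) ^ 2 := pow_pos (by linarith) 2
  have h4 : 0 < x1 + x2 + 2 * x1 * x2 - 4 := by nlinarith [hid, key, hsq]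
  have hA : 0 < (1 - x1) * (x2 - 1) := mul_pos (by linarith) (by linarith)
  have hcc : c * ((1 - x1) * (x2 - 1)) ≤ -1 / 3 * ((1 - x1) * (x2 - 1)) :=
    mul_le_mul_of_nonneg_right hc (le_of_lt hA)
  nlinarith [hcc, h4]
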